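/- Let G be a simple graph with proper edge coloring α, and suppose every proper coloring Kempe-equivalent to α has color class of color 1 different from a fixed matching M. In a minimal such coloring α (minimizing the number of bad edges, then ugly edges, among colorings Kempe-equivalent to a fixed coloring β), every bad edge is adjacent to an ugly edge, where an edge is bad if it belongs to M but is not colored 1, and ugly if it is colored 1 but does not belong to M. -/
import Mathlib


open SimpleGraph

/-- A proper edge coloring: edges of `G` sharing a vertex get different colors. -/
def IsProperEdgeColoring {V : Type*} (G : SimpleGraph V) {t : ℕ} (c : Sym2 V → Fin t) : Prop :=
  ∀ e₁ ∈ G.edgeSet, ∀ e₂ ∈ G.edgeSet, e₁ ≠ e₂ → (∃ v, v ∈ e₁ ∧ v ∈ e₂) → c e₁ ≠ c e₂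

/-- The chromatic index: least number of colors in a proper edge coloring. -/
noncomputable def chromaticIndex {V : Type*} (G : SimpleGraph V) : ℕ :=
  sInf {t | ∃ c : Sym2 V → Fin t, IsProperEdgeColoring G c}

/-- Color `c` is missing at vertex `w` under coloring `α`. -/
def MissingAt {V : Type*} (G : SimpleGraph V) {t : ℕ} (α : Sym2 V → Fin t) (c : Fin t)
    (w : V) : Prop :=
  ∀ e ∈ G.edgeSet, w ∈ e → α e ≠ c

/-- The subgraph `K_α(a,b)` induced by the edges colored `a` or `b`. -/
def bicolored {V : Type*} (G : SimpleGraph V) {t : ℕ} (α : Sym2 V → Fin t) (a b : Fin t) :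
    SimpleGraph V :=
  SimpleGraph.fromEdgeSet {e | e ∈ G.edgeSet ∧ (α e = a ∨ α e = b)}

/-- `β` is obtained from `α` by a single Kempe change: swapping two colors `a`, `b` on a
connected component of the bicolored subgraph `K_α(a,b)`. -/
def IsKempeSwap {V : Type*} (G : SimpleGraph V) {t : ℕ} (α β : Sym2 V → Fin t) : Prop :=
  ∃ a b : Fin t, ∃ C : (bicolored G α a b).ConnectedComponent,
    (∀ e ∈ G.edgeSet, (α e = a ∨ α e = b) →
      (∀ v ∈ e, (bicolored G α a b).connectedComponentMk v = C) →
      ((α e = a ∧ β e = b) ∨ (α e = b ∧ β e = a))) ∧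
    (∀ e : Sym2 V, (e ∉ G.edgeSet ∨ (α e ≠ a ∧ α e ≠ b) ∨
        ∃ v ∈ e, (bicolored G α a b).connectedComponentMk v ≠ C) → β e = α e)

/-- Kempe equivalence: reachability by a sequence of Kempe changes. -/
def KempeEquiv {V : Type*} (G : SimpleGraph V) {t : ℕ} (α β : Sym2 V → Fin t) : Prop :=
  Relation.ReflTransGen (IsKempeSwap G) α β

/-- `G` is chordless: in every cycle, any two nonconsecutive vertices are nonadjacent. -/
def Chordless {V : Type*} (G : SimpleGraph V) : Prop :=
  ∀ n : ℕ, 3 ≤ n → ∀ c : ZMod n → V, Function.Injective c →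
    (∀ i, G.Adj (c i) (c (i + 1))) →
    ∀ i j : ZMod n, j ≠ i → j ≠ i + 1 → i ≠ j + 1 → ¬ G.Adj (c i) (c j)

/-- An `α`-fan at `u`: edges `u x₀, …, u xₚ` with `m i` a color missing at `x i`
and `α (u x_{i+1}) = m i`. -/
structure IsFan {V : Type*} (G : SimpleGraph V) {t : ℕ} (α : Sym2 V → Fin t)
    (u : V) (p : ℕ) (x : ℕ → V) (m : ℕ → Fin t) : Prop where
  adj : ∀ i ≤ p, G.Adj u (x i)
  inj : ∀ i ≤ p, ∀ j ≤ p, x i = x j → i = j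
  missing : ∀ i ≤ p, MissingAt G α (m i) (x i)
  succ : ∀ i < p, α s(u, x (i + 1)) = m i

/-- The coloring `X_u^{-1}(α,v)`: each fan edge `u xᵢ` is recolored with `m i`,
all other edges keep their color. -/
def IsFanRecolor {V : Type*} {t : ℕ} (α : Sym2 V → Fin t)
    (u : V) (p : ℕ) (x : ℕ → V) (m : ℕ → Fin t) (β : Sym2 V → Fin t) : Prop :=
  (∀ i ≤ p, β s(u, x i) = m i) ∧ (∀ e : Sym2 V, (∀ i ≤ p, e ≠ s(u, x i)) → β e = α e)

/-- A cycle fan is saturated if for every `i` the component of `K_α(α(u xᵢ), m_α(u))`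
containing `u` also contains `x_{i-1}` (cyclically). -/
def SaturatedCycleFan {V : Type*} (G : SimpleGraph V) {t : ℕ} (α : Sym2 V → Fin t)
    (u : V) (p : ℕ) (x : ℕ → V) (mu : Fin t) : Prop :=
  ∀ i ≤ p, (bicolored G α (α s(u, x i)) mu).connectedComponentMk u =
    (bicolored G α (α s(u, x i)) mu).connectedComponentMk (x (if i = 0 then p else i - 1))


private lemma walk_closed {V : Type*} (H : SimpleGraph V) (S : Set V)
    (hS : ∀ x ∈ S, ∀ y, H.Adj x y → y ∈ S)
    {u w : V} (p : H.Walk u w) (hu : u ∈ S) : w ∈ S := by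
  induction p with
  | nil => exact hu
  | cons h _ ih => exact ih (hS _ hu _ h)

/-- Property 3.2: in a minimal coloring (minimizing bad edges, then ugly edges, over the
Kempe-equivalence class of `β`), assuming no coloring in that class has color class of
color `c1` equal to the matching `M`, every bad edge is adjacent to an ugly edge. -/
theorem stmt13 {V : Type*} [Fintype V] (G : SimpleGraph V) {t : ℕ} (c1 : Fin t)
    (M : Set (Sym2 V)) (hMsub : M ⊆ G.edgeSet)
    (hmatch : ∀ e ∈ M, ∀ f ∈ M, e ≠ f → ∀ v : V, ¬(v ∈ e ∧ v ∈ f))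
    (β : Sym2 V → Fin t) (hβ : IsProperEdgeColoring G β)
    (hnever : ∀ α' : Sym2 V → Fin t, IsProperEdgeColoring G α' → KempeEquiv G β α' →
      {e | e ∈ G.edgeSet ∧ α' e = c1} ≠ M)
    (α : Sym2 V → Fin t) (hα : IsProperEdgeColoring G α) (hKα : KempeEquiv G β α)
    (hminbad : ∀ α' : Sym2 V → Fin t, IsProperEdgeColoring G α' → KempeEquiv G β α' →
      {e | e ∈ M ∧ α e ≠ c1}.ncard ≤ {e | e ∈ M ∧ α' e ≠ c1}.ncard)
    (hminugly : ∀ α' : Sym2 V → Fin t, IsProperEdgeColoring G α' → KempeEquiv G β α' →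
      {e | e ∈ M ∧ α' e ≠ c1}.ncard = {e | e ∈ M ∧ α e ≠ c1}.ncard →
      {e | e ∈ G.edgeSet ∧ e ∉ M ∧ α e = c1}.ncard ≤
        {e | e ∈ G.edgeSet ∧ e ∉ M ∧ α' e = c1}.ncard) :
    ∀ e ∈ M, α e ≠ c1 →
      ∃ f ∈ G.edgeSet, f ∉ M ∧ α f = c1 ∧ f ≠ e ∧ ∃ v : V, v ∈ e ∧ v ∈ f := by
  classical
  intro e heM hne
  by_contra hcon
  push_neg at hcon
  have heG : e ∈ G.edgeSet := hMsub heM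
  -- no edge adjacent to e (other than e) is colored c1
  have noC1 : ∀ f ∈ G.edgeSet, f ≠ e → (∃ w, w ∈ e ∧ w ∈ f) → α f ≠ c1 := by
    rintro f hf hfe ⟨w, hwe, hwf⟩ hc
    by_cases hfM : f ∈ M
    · exact hmatch e heM f hfM (Ne.symm hfe) w ⟨hwe, hwf⟩
    · have := hcon f hf hfM hc hfe
      first
      | exact this w ⟨hwe, hwf⟩
      | exact this w hwe hwf
      | exact (this w hwe) hwf
  obtain ⟨⟨u, v⟩, huv⟩ := e.exists_rep
  have hesuv : e = s(u, v) := huv.symm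
  have hadj : G.Adj u v := by rw [← SimpleGraph.mem_edgeSet, ← hesuv]; exact heG
  have huvne : u ≠ v := hadj.ne
  set a := α e with ha
  have hac1 : a ≠ c1 := hne
  set H := bicolored G α a c1 with hH
  -- the set {u, v} is closed under H-adjacency
  have hclosed : ∀ x ∈ ({u, v} : Set V), ∀ y, H.Adj x y → y ∈ ({u, v} : Set V) := by
    intro x hx y hxy
    rw [hH, bicolored, SimpleGraph.fromEdgeSet_adj] at hxy
    obtain ⟨⟨hfG, hfcol⟩, hxyne⟩ := hxy
    have hxe : x ∈ e := by
      rw [hesuv, Sym2.mem_iff]; simpa using hx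
    by_cases hfe : s(x, y) = e
    · rw [hesuv] at hfe
      rcases Sym2.eq_iff.mp hfe with ⟨_, rfl⟩ | ⟨_, rfl⟩
      · exact Or.inr rfl
      · exact Or.inl rfl
    · exfalso
      have hshare : ∃ w, w ∈ e ∧ w ∈ s(x, y) := ⟨x, hxe, Sym2.mem_mk_left x y⟩
      rcases hfcol with h1 | h1
      · exact hα e heG s(x, y) hfG (Ne.symm hfe) ⟨x, hxe, Sym2.mem_mk_left x y⟩ (ha ▸ h1.symm)
      · exact noC1 s(x, y) hfG hfe hshare h1
  set C := H.connectedComponentMk u with hC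
  have hHuv : H.Adj u v := by
    rw [hH, bicolored, SimpleGraph.fromEdgeSet_adj]
    exact ⟨⟨hesuv ▸ heG, Or.inl (by rw [← hesuv])⟩, huvne⟩
  have hcompv : H.connectedComponentMk v = C := (SimpleGraph.ConnectedComponent.eq).mpr hHuv.symm.reachable
  have hcomp : ∀ w, H.connectedComponentMk w = C → w = u ∨ w = v := by
    intro w hw
    have hr : H.Reachable u w := ((SimpleGraph.ConnectedComponent.eq).mp hw).symm
    obtain ⟨p⟩ := hr
    have := walk_closed H {u, v} hclosed p (Set.mem_insert u {v})
    simpa using this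
  -- define the recolored map
  set α' : Sym2 V → Fin t := fun f => if f = e then c1 else α f with hα'
  have hα'e : α' e = c1 := by simp [hα']
  have hα'ne : ∀ f, f ≠ e → α' f = α f := by intro f hf; simp [hα', hf]
  -- α' is proper
  have hproper' : IsProperEdgeColoring G α' := by
    intro e₁ h1 e₂ h2 hne' hshare
    by_cases he1 : e₁ = e
    · subst he1
      have he2 : e₂ ≠ e₁ := Ne.symm hne'
      rw [hα'e, hα'ne e₂ he2]
      obtain ⟨w, hw1, hw2⟩ := hshare
      exact Ne.symm (noC1 e₂ h2 he2 ⟨w, hw1, hw2⟩)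
    · by_cases he2 : e₂ = e
      · subst he2
        rw [hα'e, hα'ne e₁ he1]
        obtain ⟨w, hw1, hw2⟩ := hshare
        exact noC1 e₁ h1 he1 ⟨w, hw2, hw1⟩
      · rw [hα'ne e₁ he1, hα'ne e₂ he2]
        exact hα e₁ h1 e₂ h2 hne' hshare
  -- the single Kempe swap from α to α'
  have hswap : IsKempeSwap G α α' := by
    refine ⟨a, c1, C, ?_, ?_⟩
    · intro f hfG hfcol hall
      have hfe : f = e := by
        by_contra hfe
        obtain ⟨w, hwf⟩ : ∃ w, w ∈ f := ⟨f.out.1, Sym2.out_fst_mem f⟩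
        have hwC := hall w hwf
        have hwuv : w = u ∨ w = v := hcomp w hwC
        have hwe : w ∈ e := by
          rw [hesuv, Sym2.mem_iff]; exact hwuv
        rcases hfcol with h1 | h1
        · exact hα e heG f hfG (Ne.symm hfe) ⟨w, hwe, hwf⟩ (ha ▸ h1.symm)
        · exact noC1 f hfG hfe ⟨w, hwe, hwf⟩ h1
      subst hfe
      exact Or.inl ⟨ha.symm, hα'e⟩
    · intro f hyp
      have hfe : f ≠ e := by
        rintro rfl
        rcases hyp with h | h | ⟨w, hwf, hwC⟩
        · exact h heG
        · exact h.1 ha.symm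
        · have : w = u ∨ w = v := by rw [hesuv, Sym2.mem_iff] at hwf; exact hwf
          rcases this with rfl | rfl
          · exact hwC rfl
          · exact hwC hcompv
      exact hα'ne f hfe
  have hK' : KempeEquiv G β α' := hKα.tail hswap
  -- strict decrease of bad edges: contradiction
  have hss : {f | f ∈ M ∧ α' f ≠ c1} ⊂ {f | f ∈ M ∧ α f ≠ c1} := by
    constructor
    · rintro f ⟨hfM, hfc⟩
      have hfe : f ≠ e := by rintro rfl; exact hfc hα'e
      exact ⟨hfM, by rwa [hα'ne f hfe] at hfc⟩
    · intro hsub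
      have : e ∈ {f | f ∈ M ∧ α' f ≠ c1} := hsub ⟨heM, hne⟩
      exact this.2 hα'e
  have hfin : Finite (Sym2 V) := by
    exact Finite.of_surjective (Quot.mk _) Quot.mk_surjective
  have hlt : {f | f ∈ M ∧ α' f ≠ c1}.ncard < {f | f ∈ M ∧ α f ≠ c1}.ncard :=
    Set.ncard_lt_ncard hss (Set.toFinite _)
  exact absurd (hminbad α' hproper' hK') (not_le.mpr hlt)
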